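/- Let Λ = ℚ[p_1, p_2, …] be the polynomial ring over ℚ in countably many variables p_k indexed by positive integers. Define h_m ∈ Λ by h_0 = 1 and m·h_m = Σ_{i=1}^m p_i·h_{m−i} for m ≥ 1, and let D_1 be the unique ℚ-linear derivation of Λ with D_1(p_k) = k for all k ≥ 1. Then for every k ≥ 1 and every m ≥ 0, the k-fold iterate satisfies D_1^k(h_m) = Σ_{j=0}^{m−k} C(m−1−j, k−1)·h_j, where C(·,·) denotes the binomial coefficient and the sum is empty if k > m. -/

import Mathlib

open MvPolynomial Finset

/-- The derivation `D_1` of `Λ = ℚ[p_1, p_2, …]` with `D_1(p_k) = k` for all `k ≥ 1`. -/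
noncomputable def D1 : Derivation ℚ (MvPolynomial ℕ+ ℚ) (MvPolynomial ℕ+ ℚ) :=
  mkDerivation ℚ fun k : ℕ+ => C (((k : ℕ) : ℚ))

lemma L1 (H : ℕ → MvPolynomial ℕ+ ℚ) (H0 : H 0 = 1)
    (Hrec : ∀ m : ℕ, 1 ≤ m → (m : ℚ) • H m =
      ∑ i ∈ Finset.range m, X i.succPNat * H (m - (i + 1))) :
    ∀ m, D1 (H m) = ∑ j ∈ Finset.range m, H j := by
  intro m
  induction m using Nat.strong_induction_on with
  | _ m IH =>
  rcases Nat.eq_zero_or_pos m with rfl | hm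
  · simp [H0]
  have key : (m : ℚ) • D1 (H m) =
      ∑ i ∈ range m, (X i.succPNat * D1 (H (m - (i + 1)))
        + C (((i + 1 : ℕ)) : ℚ) * H (m - (i + 1))) := by
    have h1 := congrArg (fun p => D1 p) (Hrec m hm)
    simp only [Derivation.map_smul, map_sum, Derivation.leibniz, smul_eq_mul] at h1
    rw [h1]
    refine Finset.sum_congr rfl fun i hi => ?_
    have : D1 (X i.succPNat) = C (((i + 1 : ℕ)) : ℚ) := by
      rw [D1, mkDerivation_X]; simp
    rw [this]; ring
  have key2 : (m : ℚ) • D1 (H m) =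
      (∑ i ∈ range m, X i.succPNat * ∑ j ∈ range (m - (i + 1)), H j)
        + ∑ i ∈ range m, C (((i + 1 : ℕ)) : ℚ) * H (m - (i + 1)) := by
    rw [key, Finset.sum_add_distrib]
    congr 1
    refine Finset.sum_congr rfl fun i hi => ?_
    rw [IH _ (by simp at hi; omega)]
  -- Part A
  have hA : (∑ i ∈ range m, X i.succPNat * ∑ j ∈ range (m - (i + 1)), H j)
      = ∑ n ∈ range m, (n : ℚ) • H n := by
    have : ∀ n ∈ range m, (n : ℚ) • H n
        = ∑ i ∈ range n, X i.succPNat * H (n - (i + 1)) := by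
      intro n _
      rcases Nat.eq_zero_or_pos n with rfl | hn
      · simp
      · exact Hrec n hn
    rw [Finset.sum_congr rfl this]
    simp_rw [Finset.mul_sum]
    rw [Finset.sum_sigma', Finset.sum_sigma']
    refine (Finset.sum_nbij' (fun x => ⟨x.2, x.1 - 1 - x.2⟩)
      (fun x => ⟨x.1 + x.2 + 1, x.1⟩) ?_ ?_ ?_ ?_ ?_).symm
    · rintro ⟨n, i⟩ h
      simp only [Finset.mem_sigma, Finset.mem_range] at h ⊢
      omega
    · rintro ⟨i, j⟩ h
      simp only [Finset.mem_sigma, Finset.mem_range] at h ⊢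
      omega
    · rintro ⟨n, i⟩ h
      simp only [Finset.mem_sigma, Finset.mem_range] at h
      simp only [Sigma.mk.inj_iff, heq_eq_eq]
      exact ⟨by omega, trivial⟩
    · rintro ⟨i, j⟩ h
      simp only [Finset.mem_sigma, Finset.mem_range] at h
      simp only [Sigma.mk.inj_iff, heq_eq_eq]
      exact ⟨trivial, by omega⟩
    · rintro ⟨n, i⟩ h
      simp only [Finset.mem_sigma, Finset.mem_range] at h
      have e : n - (i + 1) = n - 1 - i := by omega
      simp only [e]
  -- Part B
  have hB : (∑ i ∈ range m, C (((i + 1 : ℕ)) : ℚ) * H (m - (i + 1)))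
      = ∑ j ∈ range m, ((m - j : ℕ) : ℚ) • H j := by
    rw [← Finset.sum_range_reflect (fun j => ((m - j : ℕ) : ℚ) • H j) m]
    refine Finset.sum_congr rfl fun i hi => ?_
    simp only [Finset.mem_range] at hi
    have e1 : m - (m - 1 - i) = i + 1 := by omega
    have e2 : m - (i + 1) = m - 1 - i := by omega
    rw [e1, e2, C_eq_smul_one]
    rw [smul_mul_assoc, one_mul]
  have final : (m : ℚ) • D1 (H m) = (m : ℚ) • ∑ j ∈ range m, H j := by
    rw [key2, hA, hB, Finset.smul_sum, ← Finset.sum_add_distrib]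
    refine Finset.sum_congr rfl fun j hj => ?_
    simp only [Finset.mem_range] at hj
    rw [← add_smul]
    congr 1
    have : (m - j : ℕ) = m - j := rfl
    push_cast [Nat.cast_sub (le_of_lt hj)]
    ring
  have hm' : (m : ℚ) ≠ 0 := by positivity
  have hC : (C (m : ℚ) : MvPolynomial ℕ+ ℚ) ≠ 0 := by
    simpa using hm'
  rw [smul_eq_C_mul, smul_eq_C_mul] at final
  exact mul_left_cancel₀ hC final

lemma L2 (H : ℕ → MvPolynomial ℕ+ ℚ) (H0 : H 0 = 1)
    (Hrec : ∀ m : ℕ, 1 ≤ m → (m : ℚ) • H m =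
      ∑ i ∈ Finset.range m, X i.succPNat * H (m - (i + 1))) :
    ∀ k, 1 ≤ k → ∀ m, (D1.toLinearMap ^ k) (H m) =
      ∑ j ∈ Finset.range (m + 1 - k), C (((m - 1 - j).choose (k - 1) : ℚ)) * H j := by
  intro k
  induction k with
  | zero => omega
  | succ k IHk =>
    intro _ m
    rcases Nat.eq_zero_or_pos k with rfl | hk1
    · simp only [zero_add, pow_one]
      show D1 (H m) = _
      rw [L1 H H0 Hrec m]
      simp
    · rw [pow_succ, Module.End.mul_apply]
      show (D1.toLinearMap ^ k) (D1 (H m)) = _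
      rw [L1 H H0 Hrec m, map_sum]
      rw [Finset.sum_congr rfl (fun j _ => IHk hk1 j)]
      have inner : ∀ t ∈ range (m + 1 - (k + 1)),
          C (((m - 1 - t).choose ((k + 1) - 1) : ℕ) : ℚ) * H t
            = ∑ u ∈ range (m - k - t),
                C (((u + (k - 1)).choose (k - 1) : ℕ) : ℚ) * H t := by
        intro t ht
        simp only [Finset.mem_range] at ht
        rw [← Finset.sum_mul]
        congr 1
        rw [← map_sum, ← Nat.cast_sum]
        congr 2
        have hN : m - k - t = (m - k - t - 1) + 1 := by omega
        rw [hN, Nat.sum_range_add_choose]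
        congr 1 <;> omega
      rw [Finset.sum_congr rfl inner]
      rw [Finset.sum_sigma', Finset.sum_sigma']
      refine Finset.sum_nbij' (fun x => ⟨x.2, x.1 - k - x.2⟩)
        (fun x => ⟨x.1 + k + x.2, x.1⟩) ?_ ?_ ?_ ?_ ?_
      · rintro ⟨j, t⟩ h
        simp only [Finset.mem_sigma, Finset.mem_range] at h ⊢
        omega
      · rintro ⟨t, u⟩ h
        simp only [Finset.mem_sigma, Finset.mem_range] at h ⊢
        omega
      · rintro ⟨j, t⟩ h
        simp only [Finset.mem_sigma, Finset.mem_range] at h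
        simp only [Sigma.mk.inj_iff, heq_eq_eq]
        exact ⟨by omega, trivial⟩
      · rintro ⟨t, u⟩ h
        simp only [Finset.mem_sigma, Finset.mem_range] at h
        simp only [Sigma.mk.inj_iff, heq_eq_eq]
        exact ⟨trivial, by omega⟩
      · rintro ⟨j, t⟩ h
        simp only [Finset.mem_sigma, Finset.mem_range] at h
        have e : j - k - t + (k - 1) = j - 1 - t := by omega
        simp only [e]

/-- If `h_0 = 1` and `m·h_m = Σ_{i=1}^m p_i·h_{m-i}` for `m ≥ 1`, then for every `k ≥ 1` and
`m ≥ 0`, `D_1^k(h_m) = Σ_{j=0}^{m-k} C(m-1-j, k-1)·h_j` (empty sum if `k > m`). -/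
theorem stmt5 (H : ℕ → MvPolynomial ℕ+ ℚ) (H0 : H 0 = 1)
    (Hrec : ∀ m : ℕ, 1 ≤ m → (m : ℚ) • H m =
      ∑ i ∈ Finset.range m, X i.succPNat * H (m - (i + 1)))
    (k m : ℕ) (hk : 1 ≤ k) :
    (D1.toLinearMap ^ k) (H m) =
      ∑ j ∈ Finset.range (m + 1 - k), C (((m - 1 - j).choose (k - 1) : ℚ)) * H j := by
  exact L2 H H0 Hrec k hk m
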